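/- arXiv:2106.00106 — 3 statements merged into one kernel-verified Lean document; each statement's English description precedes it below -/
import Mathlib

section
/- Consider the Koopman operator K_{F_π} on the Fock space F²(ℂ) given by composition with F_π(z) = −z. The function φ(z) = e^{z²/4} is an eigenfunction of K_{F_π} with eigenvalue 1 (since φ is even and φ ∈ F²(ℂ)), but the product φ·φ = e^{z²/2} is not an element of F²(ℂ). Hence the eigenfunctions of a Koopman operator over an RKHS need not be closed under multiplication. -/
open scoped Nat

lemma aux_choose_le_four_pow (k : ℕ) : (2 * k).choose k ≤ 4 ^ k := by
  calc (2 * k).choose k ≤ ∑ m ∈ Finset.range (2 * k + 1), (2 * k).choose m :=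
        Finset.single_le_sum (fun i _ => Nat.zero_le _)
          (by simp [Finset.mem_range]; omega)
    _ = 2 ^ (2 * k) := Nat.sum_range_choose _
    _ = 4 ^ k := by rw [pow_mul]; norm_num

lemma aux_choose_fac (k : ℕ) : (2 * k).choose k * k ! * k ! = (2 * k)! := by
  have h := Nat.choose_mul_factorial_mul_factorial (show k ≤ 2 * k by omega)
  simpa [show 2 * k - k = k by omega] using h

lemma aux_factorial_le (k : ℕ) : ((2 * k)! : ℝ) ≤ 4 ^ k * (k ! : ℝ) ^ 2 := by
  have h2 := aux_choose_le_four_pow k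
  calc ((2 * k)! : ℝ) = ((2 * k).choose k : ℝ) * k ! * k ! := by
        exact_mod_cast (aux_choose_fac k).symm
    _ ≤ (4 : ℝ) ^ k * k ! * k ! := by
        have h4 : ((2 * k).choose k : ℝ) ≤ (4 : ℝ) ^ k := by exact_mod_cast h2
        have hf : (0 : ℝ) ≤ (k ! : ℝ) := by positivity
        apply mul_le_mul_of_nonneg_right _ hf
        exact mul_le_mul_of_nonneg_right h4 hf
    _ = 4 ^ k * (k ! : ℝ) ^ 2 := by ring

lemma aux_factorial_ge (k : ℕ) : 4 ^ k * (k ! : ℝ) ^ 2 ≤ (2 * k + 1) * ((2 * k)! : ℝ) := by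
  have h : 4 ^ k ≤ (2 * k + 1) * Nat.centralBinom k := by
    rcases Nat.eq_zero_or_pos k with rfl | hk
    · simp [Nat.centralBinom]
    · have := Nat.four_pow_le_two_mul_self_mul_centralBinom k hk
      nlinarith [Nat.centralBinom_pos k]
  have h2 : Nat.centralBinom k * (k ! * k !) = (2 * k)! := by
    rw [Nat.centralBinom_eq_two_mul_choose, ← mul_assoc]
    exact aux_choose_fac k
  have h3 : 4 ^ k * (k ! * k !) ≤ (2 * k + 1) * (2 * k)! := by
    calc 4 ^ k * (k ! * k !) ≤ (2 * k + 1) * Nat.centralBinom k * (k ! * k !) :=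
          Nat.mul_le_mul_right _ h
      _ = (2 * k + 1) * (Nat.centralBinom k * (k ! * k !)) := by ring
      _ = (2 * k + 1) * (2 * k)! := by rw [h2]
  calc (4 : ℝ) ^ k * (k ! : ℝ) ^ 2 = ((4 ^ k * (k ! * k !) : ℕ) : ℝ) := by push_cast; ring
    _ ≤ (((2 * k + 1) * (2 * k)! : ℕ) : ℝ) := by exact_mod_cast h3
    _ = (2 * k + 1) * ((2 * k)! : ℝ) := by push_cast; ring

lemma aux_tsum_exp (r : ℂ) (hr : r ≠ 0) (z : ℂ) :
    ∑' m : ℕ, (if m % 2 = 0 then 1 / (r ^ (m / 2) * ((m / 2)! : ℂ)) else 0) * z ^ m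
      = Complex.exp (z ^ 2 / r) := by
  have hinj : Function.Injective (fun k : ℕ => 2 * k) := fun x y h => by dsimp at h; omega
  rw [Complex.exp_eq_exp_ℂ, NormedSpace.exp_eq_tsum_div]
  rw [← Function.Injective.tsum_eq hinj (f := fun m : ℕ =>
      (if m % 2 = 0 then 1 / (r ^ (m / 2) * ((m / 2)! : ℂ)) else 0) * z ^ m) ?_]
  · apply tsum_congr; intro k
    simp only [Nat.mul_mod_right, Nat.mul_div_cancel_left _ (by norm_num : 0 < 2), if_pos rfl, if_true]
    rw [pow_mul, div_pow]
    have hfk : ((k ! : ℂ)) ≠ 0 := by exact_mod_cast (Nat.factorial_pos k).ne'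
    field_simp
  · intro m hm
    rcases Nat.even_or_odd m with ⟨k, hk⟩ | h
    · exact ⟨k, by dsimp; omega⟩
    · exact absurd (by simp [Nat.odd_iff.mp h]) (Function.mem_support.mp hm)

/-- No lattice of eigenfunctions: for the Koopman operator `K_{F_π} g(z) = g(-z)` on
the Fock space `F²(ℂ)`, the function `φ(z) = e^{z²/4}` (coefficients
`a_{2m} = 1/(4^m m!)`) is an eigenfunction with eigenvalue `1`: `φ ∈ F²(ℂ)` and
`φ(-z) = 1 * φ(z)`.  But the product `φ·φ = e^{z²/2}` (coefficients
`b_{2m} = 1/(2^m m!)`) is not in `F²(ℂ)`, since its coefficient series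
`Σ |bₘ|² m! = Σ (2m)!/(4^m (m!)²)` diverges. -/
theorem eigenfunctions_not_closed_under_multiplication :
    let a : ℕ → ℂ := fun m =>
      if m % 2 = 0 then 1 / ((4 : ℂ) ^ (m / 2) * (Nat.factorial (m / 2) : ℂ)) else 0
    let b : ℕ → ℂ := fun m =>
      if m % 2 = 0 then 1 / ((2 : ℂ) ^ (m / 2) * (Nat.factorial (m / 2) : ℂ)) else 0
    -- φ ∈ F²(ℂ)
    (Summable fun m : ℕ => ‖a m‖ ^ 2 * (Nat.factorial m : ℝ)) ∧
    -- φ is an eigenfunction of K_{F_π} with eigenvalue 1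
    (∀ z : ℂ, ∑' m : ℕ, a m * (-z) ^ m = 1 * ∑' m : ℕ, a m * z ^ m) ∧
    -- φ·φ = e^{z²/2}
    (∀ z : ℂ, (∑' m : ℕ, a m * z ^ m) * (∑' m : ℕ, a m * z ^ m)
        = ∑' m : ℕ, b m * z ^ m) ∧
    -- but φ·φ ∉ F²(ℂ)
    ¬ (Summable fun m : ℕ => ‖b m‖ ^ 2 * (Nat.factorial m : ℝ)) := by
  intro a b
  have hinj : Function.Injective (fun k : ℕ => 2 * k) := fun x y h => by dsimp at h; omega
  have ha2 : ∀ k : ℕ, a (2 * k) = 1 / ((4 : ℂ) ^ k * (k ! : ℂ)) := by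
    intro k
    simp [a, Nat.mul_mod_right, Nat.mul_div_cancel_left _ (by norm_num : 0 < 2)]
  have hb2 : ∀ k : ℕ, b (2 * k) = 1 / ((2 : ℂ) ^ k * (k ! : ℂ)) := by
    intro k
    simp [b, Nat.mul_mod_right, Nat.mul_div_cancel_left _ (by norm_num : 0 < 2)]
  have haodd : ∀ m : ℕ, m % 2 = 1 → a m = 0 := fun m h => by simp [a, h]
  have hfr : ∀ k : ℕ, (0 : ℝ) < (k ! : ℝ) := fun k => by exact_mod_cast Nat.factorial_pos k
  have hna : ∀ k : ℕ, ‖a (2 * k)‖ = ((4 : ℝ) ^ k * (k ! : ℝ))⁻¹ := by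
    intro k
    rw [ha2 k, show ((4 : ℂ) ^ k * (k ! : ℂ)) = (((4 : ℝ) ^ k * (k ! : ℝ) : ℝ) : ℂ) by
      push_cast; ring]
    rw [one_div, norm_inv, Complex.norm_real, Real.norm_eq_abs,
      abs_of_pos (by positivity)]
  have hnb : ∀ k : ℕ, ‖b (2 * k)‖ = ((2 : ℝ) ^ k * (k ! : ℝ))⁻¹ := by
    intro k
    rw [hb2 k, show ((2 : ℂ) ^ k * (k ! : ℂ)) = (((2 : ℝ) ^ k * (k ! : ℝ) : ℝ) : ℂ) by
      push_cast; ring]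
    rw [one_div, norm_inv, Complex.norm_real, Real.norm_eq_abs,
      abs_of_pos (by positivity)]
  refine ⟨?_, ?_, ?_, ?_⟩
  · -- summability of a-series
    refine Summable.of_nonneg_of_le
      (fun m => by positivity) (fun m => ?_)
      (summable_geometric_of_lt_one (r := 1/2) (by norm_num) (by norm_num))
    rcases Nat.even_or_odd m with ⟨k, rfl⟩ | h
    · rw [show k + k = 2 * k by ring, hna k]
      have hx : (0 : ℝ) < (4 : ℝ) ^ k := by positivity
      calc (((4 : ℝ) ^ k * (k ! : ℝ))⁻¹) ^ 2 * ((2 * k)! : ℝ)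
          ≤ (((4 : ℝ) ^ k * (k ! : ℝ))⁻¹) ^ 2 * ((4 : ℝ) ^ k * (k ! : ℝ) ^ 2) :=
            mul_le_mul_of_nonneg_left (aux_factorial_le k) (by positivity)
        _ = ((4 : ℝ) ^ k)⁻¹ := by
            field_simp
        _ = (1 / 2 : ℝ) ^ (2 * k) := by
            rw [pow_mul, ← inv_pow]; norm_num
    · rw [haodd m (Nat.odd_iff.mp h)]
      simp
  · -- eigenfunction
    intro z
    rw [one_mul]
    apply tsum_congr
    intro m
    rcases Nat.even_or_odd m with hm | hm
    · rw [hm.neg_pow]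
    · rw [haodd m (Nat.odd_iff.mp hm)]; simp
  · -- product
    intro z
    have h4 := aux_tsum_exp 4 (by norm_num) z
    have h2 := aux_tsum_exp 2 (by norm_num) z
    show (∑' m : ℕ, a m * z ^ m) * (∑' m : ℕ, a m * z ^ m) = ∑' m : ℕ, b m * z ^ m
    rw [show (fun m : ℕ => a m * z ^ m) = fun m : ℕ =>
        (if m % 2 = 0 then 1 / ((4:ℂ) ^ (m / 2) * ((m / 2)! : ℂ)) else 0) * z ^ m from rfl]
    rw [show (fun m : ℕ => b m * z ^ m) = fun m : ℕ =>
        (if m % 2 = 0 then 1 / ((2:ℂ) ^ (m / 2) * ((m / 2)! : ℂ)) else 0) * z ^ m from rfl]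
    rw [h4, h2, ← Complex.exp_add]
    congr 1
    ring
  · -- not summable
    intro hsum
    have hs2 : Summable (fun k : ℕ => ‖b (2 * k)‖ ^ 2 * ((2 * k)! : ℝ)) :=
      hsum.comp_injective hinj
    have h3 : Summable (fun k : ℕ => (1 : ℝ) / (2 * k + 1)) := by
      apply Summable.of_nonneg_of_le (fun k => by positivity) _ hs2
      intro k
      rw [hnb k]
      have hx : (0 : ℝ) < (2 : ℝ) ^ k := by positivity
      have hge := aux_factorial_ge k
      rw [div_le_iff₀ (by positivity), inv_pow, inv_mul_eq_div, div_mul_eq_mul_div,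
        le_div_iff₀ (by positivity)]
      calc (1 : ℝ) * (((2:ℝ) ^ k * (k ! : ℝ)) ^ 2) = 4 ^ k * (k ! : ℝ) ^ 2 := by
            rw [one_mul, mul_pow, ← pow_mul, mul_comm k 2, pow_mul]; norm_num
        _ ≤ (2 * k + 1) * ((2 * k)! : ℝ) := hge
        _ = ((2 * k)! : ℝ) * (2 * ↑k + 1) := by push_cast; ring
    have h4 : Summable (fun k : ℕ => (1 : ℝ) / (2 * (k + 1))) := by
      apply Summable.of_nonneg_of_le (fun k => by positivity) _ h3
      intro k
      apply one_div_le_one_div_of_le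
      · positivity
      · push_cast; linarith
    have h5 : Summable (fun k : ℕ => (1 : ℝ) / (k + 1)) := by
      have := h4.mul_left 2
      apply this.congr
      intro k
      field_simp
    have h6 : Summable (fun n : ℕ => (1 : ℝ) / n) := by
      rw [← summable_nat_add_iff 1]
      exact h5.congr fun k => by push_cast; ring
    exact Real.not_summable_one_div_natCast h6
end

section
/- Suppose the Koopman operator K_F is bounded on the native RKHS of the Gaussian RBF kernel K(x,y) = exp(−‖x−y‖²) over ℝⁿ, with symbol F : ℝⁿ → ℝⁿ. Then each component of F is real analytic on ℝⁿ. -/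
open Complex in
lemma analyticAt_rlog {x : ℝ} (hx : 0 < x) : AnalyticAt ℝ Real.log x := by
  have h1 : AnalyticAt ℂ Complex.log (x : ℂ) :=
    analyticAt_clog (Complex.ofReal_mem_slitPlane.2 hx)
  have h2 : AnalyticAt ℝ (fun t : ℝ => (Complex.log (t : ℂ)).re) x :=
    (Complex.reCLM.analyticAt _).comp
      ((h1.restrictScalars).comp (Complex.ofRealCLM.analyticAt x))
  exact h2.congr (Filter.Eventually.of_forall fun t => Complex.log_ofReal_re t)

/-- If the Koopman operator `K_F` is bounded on the native RKHS of the Gaussian RBF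
kernel `K(x,y) = exp(−‖x−y‖²)` over `ℝⁿ`, then each component of `F` is real
analytic. The native space is modeled abstractly: `H` is a real Hilbert space with
kernel family `k : ℝⁿ → H` satisfying `⟪k y, k x⟫ = exp(−‖x−y‖²)`; elements `g : H`
represent the functions `x ↦ ⟪k x, g⟫`, and (as holds for the Gaussian native
space) every such function is real analytic (`hanalytic`). Boundedness of `K_F` is
the existence of a continuous linear `T : H →L[ℝ] H` acting as composition with
`F`. -/
theorem gaussian_bounded_koopman_symbol_analytic
    {n : ℕ} {H : Type*} [NormedAddCommGroup H] [InnerProductSpace ℝ H]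
    (k : EuclideanSpace ℝ (Fin n) → H)
    (hkernel : ∀ x y : EuclideanSpace ℝ (Fin n),
      @inner ℝ _ _ (k y) (k x) = Real.exp (-‖x - y‖ ^ 2))
    (hanalytic : ∀ g : H,
      AnalyticOnNhd ℝ (fun x : EuclideanSpace ℝ (Fin n) => @inner ℝ _ _ (k x) g)
        Set.univ)
    (F : EuclideanSpace ℝ (Fin n) → EuclideanSpace ℝ (Fin n))
    (T : H →L[ℝ] H)
    (hT : ∀ (g : H) (x : EuclideanSpace ℝ (Fin n)),
      @inner ℝ _ _ (k x) (T g) = @inner ℝ _ _ (k (F x)) g) :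
    ∀ j : Fin n, AnalyticOnNhd ℝ (fun x => F x j) Set.univ := by
  have key : ∀ y : EuclideanSpace ℝ (Fin n),
      AnalyticOnNhd ℝ (fun x => Real.exp (-‖F x - y‖ ^ 2)) Set.univ := by
    intro y
    have heq : (fun x => Real.exp (-‖F x - y‖ ^ 2))
        = fun x : EuclideanSpace ℝ (Fin n) => @inner ℝ _ _ (k x) (T (k y)) := by
      funext x
      rw [hT, real_inner_comm, hkernel]
    rw [heq]
    exact hanalytic _
  intro j x₀ hx₀
  set e : EuclideanSpace ℝ (Fin n) := EuclideanSpace.single j (1 : ℝ) with he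
  have hA := key e x₀ trivial
  have hB := key 0 x₀ trivial
  have hq : AnalyticAt ℝ
      (fun x => Real.exp (-‖F x - e‖ ^ 2) / Real.exp (-‖F x - 0‖ ^ 2)) x₀ :=
    hA.div hB (ne_of_gt (Real.exp_pos _))
  have hlog : AnalyticAt ℝ
      (fun x => Real.log
        (Real.exp (-‖F x - e‖ ^ 2) / Real.exp (-‖F x - 0‖ ^ 2))) x₀ :=
    (analyticAt_rlog (by positivity)).comp hq
  have hid : (fun x => F x j) = fun x =>
      (Real.log (Real.exp (-‖F x - e‖ ^ 2) / Real.exp (-‖F x - 0‖ ^ 2)) + 1) / 2 := by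
    funext x
    rw [← Real.exp_sub, Real.log_exp, sub_zero]
    have h1 : ‖F x - e‖ ^ 2 = ‖F x‖ ^ 2 - 2 * @inner ℝ _ _ (F x) e + ‖e‖ ^ 2 :=
      norm_sub_sq_real (F x) e
    have h2 : @inner ℝ _ _ (F x) e = F x j := by
      simp [he, real_inner_comm, EuclideanSpace.inner_single_left, EuclideanSpace.inner_single_right]
    have h3 : ‖e‖ = 1 := by simp [he, EuclideanSpace.norm_single]
    rw [h1, h2, h3]
    ring
  rw [hid]
  exact ((hlog.add analyticAt_const).div analyticAt_const (by norm_num))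
end

section
/- Let F : ℂ → ℂ be entire and suppose the composition operator K_F g = g ∘ F is bounded on the complexified Gaussian RKHS H_G over ℂ (kernel K_G(z,w) = exp(−(z−w̄)²/2)). Then F is affine: F(z) = az + b with a, b ∈ ℂ. -/
open Metric Set Complex

/-- An entire function whose imaginary part has linear growth has bounded derivative. -/
lemma deriv_bound_of_im_linear_growth {F : ℂ → ℂ} (hF : Differentiable ℂ F) {C : ℝ}
    (hC : 0 ≤ C) (h : ∀ z : ℂ, |(F z).im| ≤ C + ‖z‖) (c : ℂ) :
    ‖deriv F c‖ ≤ 45 := by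
  set R : ℝ := 2 * (C + ‖c‖) + 2 with hRdef
  have habs : 0 ≤ ‖c‖ := norm_nonneg c
  have hR : 0 < R := by positivity
  set M : ℝ := 2 * R with hMdef
  set d : ℂ → ℂ := fun z => (M : ℂ) + Complex.I * (F z - ((F c).re : ℂ)) with hddef
  have hdre : ∀ z ∈ ball c R, R / 2 ≤ (d z).re := by
    intro z hz
    have hz' : ‖z‖ < ‖c‖ + R := by
      calc ‖z‖ ≤ ‖z - c‖ + ‖c‖ := by
            simpa using norm_add_le (z - c) c
      _ < ‖c‖ + R := by
            rw [mem_ball, Complex.dist_eq] at hz; linarith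
    have him : |(F z).im| ≤ C + (‖c‖ + R) := le_trans (h z) (by linarith [hz'.le])
    have : (d z).re = M - (F z).im := by
      simp [hddef, Complex.add_re, Complex.mul_re]; ring
    rw [this]
    have : (F z).im ≤ C + ‖c‖ + R := by
      have := (abs_le.mp him).2; linarith
    have hCc : C + ‖c‖ = (R - 2) / 2 := by rw [hRdef]; ring
    rw [hMdef]; linarith [hCc ▸ this]
  have hdne : ∀ z ∈ ball c R, d z ≠ 0 := by
    intro z hz hzero
    have := hdre z hz
    rw [hzero] at this
    simp at this
    linarith
  set g : ℂ → ℂ := fun z => (d z)⁻¹ with hgdef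
  have hgd : DifferentiableOn ℂ g (ball c R) := by
    apply DifferentiableOn.inv
    · exact (differentiable_const _).add
        (differentiable_const _ |>.mul ((hF.sub (differentiable_const _)))) |>.differentiableOn
    · exact hdne
  have hcball : c ∈ ball c R := mem_ball_self hR
  have hgle : ∀ z ∈ ball c R, ‖g z‖ ≤ 2 / R := by
    intro z hz
    have h1 : R / 2 ≤ ‖d z‖ :=
      le_trans (hdre z hz) (le_trans (le_abs_self _) (Complex.abs_re_le_norm _))
    have h2 : (0:ℝ) < ‖d z‖ := lt_of_lt_of_le (by positivity) h1
    rw [hgdef]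
    simp only [norm_inv]
    rw [inv_le_comm₀ h2 (by positivity)]
    calc (2/R)⁻¹ = R / 2 := by field_simp
    _ ≤ ‖d z‖ := h1
  have hmaps : MapsTo g (ball c R) (ball (g c) (5 / R)) := by
    intro z hz
    rw [mem_ball, dist_eq_norm]
    calc ‖g z - g c‖ ≤ ‖g z‖ + ‖g c‖ := norm_sub_le _ _
    _ ≤ 2/R + 2/R := add_le_add (hgle z hz) (hgle c hcball)
    _ < 5/R := by
          rw [← add_div, div_lt_div_iff_of_pos_right hR]; norm_num
  have hschwarz : ‖deriv g c‖ ≤ 5 / R / R :=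
    Complex.norm_deriv_le_div_of_mapsTo_ball hgd (hmaps.mono_right ball_subset_closedBall) hR
  -- compute deriv g c
  have hdF : HasDerivAt F (deriv F c) c := hF.differentiableAt.hasDerivAt
  have hdd : HasDerivAt d (Complex.I * deriv F c) c := by
    have : HasDerivAt (fun z => F z - ((F c).re : ℂ)) (deriv F c) c := hdF.sub_const _
    exact (this.const_mul Complex.I).const_add (M : ℂ)
  have hdg : HasDerivAt g (-(Complex.I * deriv F c) / (d c) ^ 2) c :=
    hdd.inv (hdne c hcball)
  have hderivg : deriv g c = -(Complex.I * deriv F c) / (d c) ^ 2 := hdg.deriv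
  have hdc3 : ‖d c‖ ≤ 3 * R := by
    have : d c = ((M - (F c).im : ℝ) : ℂ) := by
      apply Complex.ext <;> simp [hddef] <;> ring
    rw [this, Complex.norm_real, Real.norm_eq_abs]
    have h1 := h c
    have h2 := abs_le.mp h1
    have hCc : C + ‖c‖ = (R - 2) / 2 := by rw [hRdef]; ring
    rw [abs_le]; constructor <;> rw [hMdef] <;> nlinarith [h2.1, h2.2]
  have hdFnorm : ‖deriv F c‖ = ‖deriv g c‖ * ‖d c‖ ^ 2 := by
    rw [hderivg]
    simp only [norm_div, norm_neg, norm_mul, Complex.norm_I, norm_pow, one_mul]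
    rw [div_mul_cancel₀]
    exact pow_ne_zero 2 (norm_ne_zero_iff.mpr (hdne c hcball))
  rw [hdFnorm]
  calc ‖deriv g c‖ * ‖d c‖ ^ 2 ≤ (5 / R / R) * (3 * R)^2 := by
        apply mul_le_mul hschwarz (by nlinarith [norm_nonneg (d c)]) (by positivity) (by positivity)
  _ = 45 := by field_simp; ring


lemma affine_of_im_linear_growth {F : ℂ → ℂ} (hF : Differentiable ℂ F) {C : ℝ}
    (hC : 0 ≤ C) (h : ∀ z : ℂ, |(F z).im| ≤ C + ‖z‖) :
    ∃ a b : ℂ, ∀ z : ℂ, F z = a * z + b := by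
  have hderiv : Differentiable ℂ (deriv F) := by
    have h1 : AnalyticOnNhd ℂ F univ := analyticOnNhd_univ_iff_differentiable.mpr hF
    have h2 := h1.deriv
    exact fun z => (h2 z (mem_univ z)).differentiableAt
  have hbdd : Bornology.IsBounded (range (deriv F)) := by
    rw [Metric.isBounded_iff_subset_closedBall 0]
    refine ⟨45, ?_⟩
    intro w hw
    obtain ⟨c, rfl⟩ := hw
    simpa [Complex.dist_eq] using deriv_bound_of_im_linear_growth hF hC h c
  obtain ⟨a, ha⟩ := hderiv.exists_const_forall_eq_of_bounded hbdd
  refine ⟨a, F 0, fun z => ?_⟩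
  have hG : Differentiable ℂ (fun z : ℂ => F z - a * z) :=
    hF.sub (differentiable_id.const_mul a)
  have hG' : ∀ z : ℂ, deriv (fun z : ℂ => F z - a * z) z = 0 := by
    intro z
    have h1 : HasDerivAt (fun z : ℂ => F z - a * z) (deriv F z - a) z :=
      (hF.differentiableAt.hasDerivAt).sub (by simpa using (hasDerivAt_id z).const_mul a)
    rw [h1.deriv, ha z, sub_self]
  have := is_const_of_deriv_eq_zero hG hG' z 0
  simp only [mul_zero, sub_zero] at this
  linear_combination this

/-- If `F : ℂ → ℂ` is entire and the composition operator `K_F g = g ∘ F` is bounded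
on the complexified Gaussian RKHS `H_G` over `ℂ` (kernel
`K_G(z,w) = exp(−(z − w̄)²/2)`), then `F` is affine: `F(z) = a z + b`. The space is
modeled abstractly: `H` is a complex Hilbert space with kernel family `k : ℂ → H`
satisfying `⟪k w, k z⟫ = K_G(z,w)`, elements `g : H` represent functions
`z ↦ ⟪k z, g⟫`, and boundedness of `K_F` is the existence of a continuous linear
`T : H →L[ℂ] H` acting as composition with `F`. -/
theorem gaussian_bounded_koopman_affine
    {H : Type*} [NormedAddCommGroup H] [InnerProductSpace ℂ H]
    (k : ℂ → H)
    (hkernel : ∀ z w : ℂ,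
      @inner ℂ _ _ (k w) (k z) = Complex.exp (-(z - (starRingEnd ℂ) w) ^ 2 / 2))
    (F : ℂ → ℂ) (hF : Differentiable ℂ F)
    (T : H →L[ℂ] H)
    (hT : ∀ (g : H) (z : ℂ), @inner ℂ _ _ (k z) (T g) = @inner ℂ _ _ (k (F z)) g) :
    ∃ a b : ℂ, ∀ z : ℂ, F z = a * z + b := by
  -- Step 1: compute the norm of kernel functions
  have hnorm : ∀ w : ℂ, ‖k w‖ = Real.exp (w.im ^ 2) := by
    intro w
    have h1 : (@inner ℂ _ _ (k w) (k w)) = ((Real.exp (2 * w.im ^ 2) : ℝ) : ℂ) := by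
      rw [hkernel w w]
      have h2 : w - (starRingEnd ℂ) w = (2 * w.im : ℝ) * Complex.I := Complex.sub_conj w
      rw [h2]
      have h3 : -(((2 * w.im : ℝ) : ℂ) * Complex.I) ^ 2 / 2 = ((2 * w.im ^ 2 : ℝ) : ℂ) := by
        push_cast
        rw [mul_pow, Complex.I_sq]
        ring
      rw [h3, Complex.ofReal_exp]
    have h4 : ((‖k w‖ : ℝ) : ℂ) ^ 2 = ((Real.exp (2 * w.im ^ 2) : ℝ) : ℂ) := by
      rw [← h1, inner_self_eq_norm_sq_to_K]; norm_cast
    have h5 : ‖k w‖ ^ 2 = Real.exp (2 * w.im ^ 2) := by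
      exact_mod_cast h4
    have h6 : ‖k w‖ ^ 2 = Real.exp (w.im ^ 2) ^ 2 := by
      rw [h5, ← Real.exp_nat_mul]; norm_num
    calc ‖k w‖ = Real.sqrt (‖k w‖ ^ 2) := (Real.sqrt_sq (norm_nonneg _)).symm
    _ = Real.sqrt (Real.exp (w.im ^ 2) ^ 2) := by rw [h6]
    _ = Real.exp (w.im ^ 2) := Real.sqrt_sq (Real.exp_nonneg _)
  -- Step 2: norm inequality from boundedness
  have hle : ∀ z : ℂ, ‖k (F z)‖ ≤ ‖T‖ * ‖k z‖ := by
    intro z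
    have hpos : 0 < ‖k (F z)‖ := by rw [hnorm]; exact Real.exp_pos _
    have e1 : ‖(@inner ℂ _ _ (k (F z)) (k (F z)))‖ = ‖k (F z)‖ ^ 2 := by
      rw [inner_self_eq_norm_sq_to_K]
      simp [_root_.sq_abs]
    have e2 : ‖k (F z)‖ ^ 2 ≤ ‖k z‖ * (‖T‖ * ‖k (F z)‖) := by
      rw [← e1, ← hT (k (F z)) z]
      calc ‖(@inner ℂ _ _ (k z) (T (k (F z))))‖ ≤ ‖k z‖ * ‖T (k (F z))‖ := norm_inner_le_norm _ _
      _ ≤ ‖k z‖ * (‖T‖ * ‖k (F z)‖) := by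
          exact mul_le_mul_of_nonneg_left (T.le_opNorm _) (norm_nonneg _)
    nlinarith [norm_nonneg (k z), norm_nonneg T]
  -- Step 3: quadratic bound on imaginary parts
  set A : ℝ := Real.log (max 1 ‖T‖) with hAdef
  have hA : 0 ≤ A := Real.log_nonneg (le_max_left _ _)
  have himsq : ∀ z : ℂ, (F z).im ^ 2 ≤ A + z.im ^ 2 := by
    intro z
    have h1 := hle z
    rw [hnorm, hnorm] at h1
    have h2 : Real.exp ((F z).im ^ 2) ≤ Real.exp (A + z.im ^ 2) := by
      rw [Real.exp_add, hAdef, Real.exp_log (lt_of_lt_of_le one_pos (le_max_left 1 ‖T‖))]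
      calc Real.exp ((F z).im ^ 2) ≤ ‖T‖ * Real.exp (z.im ^ 2) := h1
      _ ≤ max 1 ‖T‖ * Real.exp (z.im ^ 2) :=
          mul_le_mul_of_nonneg_right (le_max_right _ _) (Real.exp_nonneg _)
    exact Real.exp_le_exp.mp h2
  -- Step 4: linear growth of the imaginary part
  set C : ℝ := Real.sqrt A with hCdef
  have hC : 0 ≤ C := Real.sqrt_nonneg _
  have hlin : ∀ z : ℂ, |(F z).im| ≤ C + ‖z‖ := by
    intro z
    have h1 : z.im ^ 2 ≤ ‖z‖ ^ 2 := by
      rw [Complex.sq_norm, Complex.normSq_apply]; nlinarith [sq_nonneg z.re]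
    have h2 : (F z).im ^ 2 ≤ (C + ‖z‖) ^ 2 := by
      have hCA : C ^ 2 = A := Real.sq_sqrt hA
      nlinarith [himsq z, norm_nonneg z]
    calc |(F z).im| = Real.sqrt ((F z).im ^ 2) := (Real.sqrt_sq_eq_abs _).symm
    _ ≤ Real.sqrt ((C + ‖z‖) ^ 2) := Real.sqrt_le_sqrt h2
    _ = C + ‖z‖ := Real.sqrt_sq (by positivity)
  exact affine_of_im_linear_growth hF hC hlin
end
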